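/- The orbit of the vector (0,0,0,0,0,0,1) under the group of linear automorphisms of ℝ^7 generated by the odd and even Coxeter maps ∙c and ∘c of Ẽ6 is exactly the set K3 + ℤδ, where δ = (1,2,1,2,1,2,3) and K3 consists of the 4 vectors (0,−1,0,−1,0,−1,−1), (0,0,0,0,0,0,−1), (0,0,0,0,0,0,1), (0,1,0,1,0,1,1). In particular this Coxeter orbit is the union of exactly 4 δ-series of roots. -/

import Mathlib

@[simp] lemma cons_val_five' {α : Type*} (a b c d e f g : α) : ![a,b,c,d,e,f,g] 5 = f := rfl
@[simp] lemma cons_val_six' {α : Type*} (a b c d e f g : α) : ![a,b,c,d,e,f,g] 6 = g := rfl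

/-- The odd Coxeter map `∙c` of `Ẽ6`:
`∙c(x) = (x2−x1, x2, x4−x3, x4, x6−x5, x6, x2+x4+x6−x0)` in the coordinates
`x = (x1,…,x6,x0)` (here `x i`, `i = 0,…,5`, are `x1,…,x6` and `x 6` is `x0`). -/
def cOddFun (x : Fin 7 → ℝ) : Fin 7 → ℝ :=
  ![x 1 - x 0, x 1, x 3 - x 2, x 3, x 5 - x 4, x 5, x 1 + x 3 + x 5 - x 6]

/-- The even Coxeter map `∘c` of `Ẽ6`:
`∘c(x) = (x1, x1+x0−x2, x3, x3+x0−x4, x5, x5+x0−x6, x0)`. -/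
def cEvenFun (x : Fin 7 → ℝ) : Fin 7 → ℝ :=
  ![x 0, x 0 + x 6 - x 1, x 2, x 2 + x 6 - x 3, x 4, x 4 + x 6 - x 5, x 6]

lemma cOddFun_involutive : Function.Involutive cOddFun := by
  intro x; funext i; fin_cases i <;> simp [cOddFun]

lemma cEvenFun_involutive : Function.Involutive cEvenFun := by
  intro x; funext i; fin_cases i <;> simp [cEvenFun]

/-- The odd Coxeter map as a (linear) automorphism of `ℝ^7`. -/
def cOdd : Equiv.Perm (Fin 7 → ℝ) := cOddFun_involutive.toPerm

/-- The even Coxeter map as a (linear) automorphism of `ℝ^7`. -/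
def cEven : Equiv.Perm (Fin 7 → ℝ) := cEvenFun_involutive.toPerm

/-- The minimal imaginary root `δ = (1,2,1,2,1,2,3)` of `Ẽ6`. -/
def deltaE6 : Fin 7 → ℝ := ![1, 2, 1, 2, 1, 2, 3]

/-- The 4 vectors of the Coxeter series `K3`. -/
def K3 : Set (Fin 7 → ℝ) :=
  { ![0, -1, 0, -1, 0, -1, -1], ![0, 0, 0, 0, 0, 0, -1],
    ![0, 0, 0, 0, 0, 0, 1], ![0, 1, 0, 1, 0, 1, 1] }

def KSet : Set (Fin 7 → ℝ) := {y | ∃ v ∈ K3, ∃ k : ℤ, y = v + k • deltaE6}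

lemma cOdd_smul (x : Fin 7 → ℝ) : cOdd • x = cOddFun x := rfl
lemma cEven_smul (x : Fin 7 → ℝ) : cEven • x = cEvenFun x := rfl

lemma cOdd_inv : cOdd⁻¹ = cOdd := by
  rw [Equiv.Perm.inv_def, cOdd, Function.Involutive.toPerm_symm]

lemma cEven_inv : cEven⁻¹ = cEven := by
  rw [Equiv.Perm.inv_def, cEven, Function.Involutive.toPerm_symm]

lemma odd_nv (k : ℤ) :
    cOddFun (![0,-1,0,-1,0,-1,-1] + k • deltaE6) = ![0,1,0,1,0,1,1] + (k-1) • deltaE6 := by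
  funext i; fin_cases i <;>
    simp [cOddFun, deltaE6, zsmul_eq_mul] <;> ring

lemma odd_ne (k : ℤ) :
    cOddFun (![0,0,0,0,0,0,-1] + k • deltaE6) = ![0,0,0,0,0,0,1] + k • deltaE6 := by
  funext i; fin_cases i <;>
    simp [cOddFun, deltaE6, zsmul_eq_mul] <;> ring

lemma odd_e (k : ℤ) :
    cOddFun (![0,0,0,0,0,0,1] + k • deltaE6) = ![0,0,0,0,0,0,-1] + k • deltaE6 := by
  funext i; fin_cases i <;>
    simp [cOddFun, deltaE6, zsmul_eq_mul] <;> ring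

lemma odd_v (k : ℤ) :
    cOddFun (![0,1,0,1,0,1,1] + k • deltaE6) = ![0,-1,0,-1,0,-1,-1] + (k+1) • deltaE6 := by
  funext i; fin_cases i <;>
    simp [cOddFun, deltaE6, zsmul_eq_mul] <;> ring

lemma even_nv (k : ℤ) :
    cEvenFun (![0,-1,0,-1,0,-1,-1] + k • deltaE6) = ![0,0,0,0,0,0,-1] + k • deltaE6 := by
  funext i; fin_cases i <;>
    simp [cEvenFun, deltaE6, zsmul_eq_mul] <;> ring

lemma even_ne (k : ℤ) :
    cEvenFun (![0,0,0,0,0,0,-1] + k • deltaE6) = ![0,-1,0,-1,0,-1,-1] + k • deltaE6 := by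
  funext i; fin_cases i <;>
    simp [cEvenFun, deltaE6, zsmul_eq_mul] <;> ring

lemma even_e (k : ℤ) :
    cEvenFun (![0,0,0,0,0,0,1] + k • deltaE6) = ![0,1,0,1,0,1,1] + k • deltaE6 := by
  funext i; fin_cases i <;>
    simp [cEvenFun, deltaE6, zsmul_eq_mul] <;> ring

lemma even_v (k : ℤ) :
    cEvenFun (![0,1,0,1,0,1,1] + k • deltaE6) = ![0,0,0,0,0,0,1] + k • deltaE6 := by
  funext i; fin_cases i <;>
    simp [cEvenFun, deltaE6, zsmul_eq_mul] <;> ring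

lemma mem_nv : ![0,-1,0,-1,0,-1,-1] ∈ K3 := by simp [K3]
lemma mem_ne : ![0,0,0,0,0,0,-1] ∈ K3 := by simp [K3]
lemma mem_e : ![0,0,0,0,0,0,1] ∈ K3 := by simp [K3]
lemma mem_v : ![0,1,0,1,0,1,1] ∈ K3 := by simp [K3]

lemma odd_S {y : Fin 7 → ℝ} (hy : y ∈ KSet) : cOddFun y ∈ KSet := by
  obtain ⟨v, hv, k, rfl⟩ := hy
  simp only [K3, Set.mem_insert_iff, Set.mem_singleton_iff] at hv
  rcases hv with rfl | rfl | rfl | rfl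
  · exact ⟨_, mem_v, k - 1, odd_nv k⟩
  · exact ⟨_, mem_e, k, odd_ne k⟩
  · exact ⟨_, mem_ne, k, odd_e k⟩
  · exact ⟨_, mem_nv, k + 1, odd_v k⟩

lemma even_S {y : Fin 7 → ℝ} (hy : y ∈ KSet) : cEvenFun y ∈ KSet := by
  obtain ⟨v, hv, k, rfl⟩ := hy
  simp only [K3, Set.mem_insert_iff, Set.mem_singleton_iff] at hv
  rcases hv with rfl | rfl | rfl | rfl
  · exact ⟨_, mem_ne, k, even_nv k⟩
  · exact ⟨_, mem_nv, k, even_ne k⟩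
  · exact ⟨_, mem_v, k, even_e k⟩
  · exact ⟨_, mem_e, k, even_v k⟩

abbrev HH : Subgroup (Equiv.Perm (Fin 7 → ℝ)) := Subgroup.closure {cOdd, cEven}

lemma cOdd_mem : cOdd ∈ HH := Subgroup.subset_closure (by simp)
lemma cEven_mem : cEven ∈ HH := Subgroup.subset_closure (by simp)

lemma closure_S {g : Equiv.Perm (Fin 7 → ℝ)} (hg : g ∈ HH) :
    ∀ y ∈ KSet, g • y ∈ KSet := by
  have key : ∀ g ∈ HH, (∀ y ∈ KSet, g • y ∈ KSet) ∧ (∀ y ∈ KSet, g⁻¹ • y ∈ KSet) := by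
    intro g hg
    induction hg using Subgroup.closure_induction with
    | mem x hx =>
        rcases hx with rfl | rfl
        · rw [cOdd_inv]
          exact ⟨fun y hy => odd_S hy, fun y hy => odd_S hy⟩
        · rw [cEven_inv]
          exact ⟨fun y hy => even_S hy, fun y hy => even_S hy⟩
    | one => simp
    | mul a b _ _ ha hb =>
        refine ⟨fun y hy => ?_, fun y hy => ?_⟩
        · rw [mul_smul]; exact ha.1 _ (hb.1 _ hy)
        · rw [mul_inv_rev, mul_smul]; exact hb.2 _ (ha.2 _ hy)
    | inv a _ ha =>
        exact ⟨ha.2, by simpa using ha.1⟩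
  exact (key g hg).1

lemma step {g : Equiv.Perm (Fin 7 → ℝ)} (hg : g ∈ HH) {y : Fin 7 → ℝ}
    (hy : y ∈ MulAction.orbit HH (![0,0,0,0,0,0,1] : Fin 7 → ℝ)) :
    g • y ∈ MulAction.orbit HH (![0,0,0,0,0,0,1] : Fin 7 → ℝ) := by
  obtain ⟨a, rfl⟩ := hy
  exact ⟨⟨g, hg⟩ * a, by simp [Submonoid.smul_def, mul_smul]⟩

lemma mem_orbit_e (k : ℤ) :
    (![0,0,0,0,0,0,1] + k • deltaE6 : Fin 7 → ℝ) ∈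
      MulAction.orbit HH (![0,0,0,0,0,0,1] : Fin 7 → ℝ) := by
  induction k using Int.induction_on with
  | zero => simpa using MulAction.mem_orbit_self (![0,0,0,0,0,0,1] : Fin 7 → ℝ)
  | succ k ih =>
      have h1 := step cEven_mem ih
      rw [cEven_smul, even_e] at h1
      have h2 := step cOdd_mem h1
      rw [cOdd_smul, odd_v] at h2
      have h3 := step cEven_mem h2
      rw [cEven_smul, even_nv] at h3
      have h4 := step cOdd_mem h3
      rw [cOdd_smul, odd_ne] at h4
      exact_mod_cast h4
  | pred k ih =>
      have h1 := step cOdd_mem ih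
      rw [cOdd_smul, odd_e] at h1
      have h2 := step cEven_mem h1
      rw [cEven_smul, even_ne] at h2
      have h3 := step cOdd_mem h2
      rw [cOdd_smul, odd_nv] at h3
      have h4 := step cEven_mem h3
      rw [cEven_smul, even_v] at h4
      exact h4

/-- The orbit of `(0,0,0,0,0,0,1)` under the group generated by the odd and
even Coxeter maps of `Ẽ6` is exactly `K3 + ℤδ`; moreover the map
`(v,k) ↦ v + kδ` is injective on `K3 × ℤ`, so this orbit is the union of
exactly 4 `δ`-series of roots. -/
theorem coxeter_orbit_K3 :
    MulAction.orbit (Subgroup.closure {cOdd, cEven} : Subgroup (Equiv.Perm (Fin 7 → ℝ)))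
        (![0, 0, 0, 0, 0, 0, 1] : Fin 7 → ℝ)
      = {y | ∃ v ∈ K3, ∃ k : ℤ, y = v + k • deltaE6} ∧
    Set.InjOn (fun p : (Fin 7 → ℝ) × ℤ => p.1 + p.2 • deltaE6) (K3 ×ˢ Set.univ) := by
  constructor
  · ext y
    constructor
    · rintro ⟨g, rfl⟩
      have he : (![0,0,0,0,0,0,1] : Fin 7 → ℝ) ∈ KSet := ⟨_, mem_e, 0, by simp⟩
      exact closure_S g.2 _ he
    · rintro ⟨v, hv, k, rfl⟩
      simp only [K3, Set.mem_insert_iff, Set.mem_singleton_iff] at hv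
      rcases hv with rfl | rfl | rfl | rfl
      · have h1 := step cOdd_mem (mem_orbit_e k)
        rw [cOdd_smul, odd_e] at h1
        have h2 := step cEven_mem h1
        rw [cEven_smul, even_ne] at h2
        exact h2
      · have h1 := step cOdd_mem (mem_orbit_e k)
        rw [cOdd_smul, odd_e] at h1
        exact h1
      · exact mem_orbit_e k
      · have h1 := step cEven_mem (mem_orbit_e k)
        rw [cEven_smul, even_e] at h1
        exact h1
  · rintro ⟨v, k⟩ ⟨hv, -⟩ ⟨w, l⟩ ⟨hw, -⟩ h
    simp only at h
    have h0 := congrFun h 0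
    have hv0 : v 0 = 0 := by
      simp only [K3, Set.mem_insert_iff, Set.mem_singleton_iff] at hv
      rcases hv with rfl | rfl | rfl | rfl <;> simp
    have hw0 : w 0 = 0 := by
      simp only [K3, Set.mem_insert_iff, Set.mem_singleton_iff] at hw
      rcases hw with rfl | rfl | rfl | rfl <;> simp
    have hkl : k = l := by
      have : (k : ℝ) = l := by
        simpa [hv0, hw0, deltaE6, zsmul_eq_mul] using h0
      exact_mod_cast this
    subst hkl
    have hvw : v = w := by
      have := h
      simpa using add_right_cancel this
    exact Prod.ext hvw rfl
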